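/- Fix constants 𝔠 > 0 and s > 0, and let f̂ : ℝ → ℝ be a bounded Lipschitz function. Then the two-point boundary value problem ρ'' = s² f̂(ρ) on [0,1], ρ(0) = 0, ρ(1) = 𝔠, has a solution ρ ∈ C²([0,1]) satisfying ‖ρ‖_{C²[0,1]} ≤ (13 s²/8) sup|f̂| + 2𝔠, and ρ'' is Lipschitz with constant s² Lip(f̂) ((13 s²/8) sup|f̂| + 2𝔠). -/

import Mathlib

open Set MeasureTheory intervalIntegral

namespace Stmt4
noncomputable section

abbrev X : Type := C(Set.Icc (0:ℝ) 1, ℝ)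

def ext (g : X) : ℝ → ℝ := fun t => g (Set.projIcc 0 1 zero_le_one t)

lemma continuous_ext (g : X) : Continuous (ext g) := g.continuous.comp continuous_projIcc

lemma ext_eq (g : X) {t : ℝ} (ht : t ∈ Set.Icc (0:ℝ) 1) : ext g t = g ⟨t, ht⟩ := by
  simp [ext, Set.projIcc_of_mem zero_le_one ht]

/-- helper: bound an interval integral by a pointwise dominating function -/
lemma abs_int_le {f φ : ℝ → ℝ} {a b : ℝ} (hab : a ≤ b) (hf : Continuous f)
    (hφ : Continuous φ) (hb : ∀ t ∈ Set.Icc a b, |f t| ≤ φ t) :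
    |∫ t in a..b, f t| ≤ ∫ t in a..b, φ t := by
  calc |∫ t in a..b, f t| ≤ ∫ t in a..b, |f t| := by
        simpa [Real.norm_eq_abs] using
          intervalIntegral.norm_integral_le_integral_norm (f := f) (μ := volume) hab
    _ ≤ _ := intervalIntegral.integral_mono_on hab (hf.abs.intervalIntegrable _ _)
        (hφ.intervalIntegrable _ _) hb

lemma int_poly (c1 c2 : ℝ) (n : ℕ) (a b : ℝ) :
    ∫ t in a..b, (c1 + c2 * t ^ n) = c1 * (b - a) + c2 * ((b ^ (n+1) - a ^ (n+1)) / (n+1)) := by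
  rw [intervalIntegral.integral_add (f := fun _ => c1) (g := fun t : ℝ => c2 * t ^ n)
      (continuous_const.intervalIntegrable _ _)
      ((continuous_const.mul (continuous_pow n)).intervalIntegrable _ _),
    intervalIntegral.integral_const, intervalIntegral.integral_const_mul, integral_pow]
  simp [smul_eq_mul]
  ring

variable (s2 : ℝ) (fhat : ℝ → ℝ)

def Fg (g : X) : ℝ → ℝ := fun t => fhat (ext g t)

def Pfun (a : ℝ) (g : X) : ℝ → ℝ := fun y =>
  a * y + s2 * (y * (∫ t in (0:ℝ)..y, Fg fhat g t) - ∫ t in (0:ℝ)..y, t * Fg fhat g t)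

variable (hfc : Continuous fhat)
include hfc

lemma continuous_Fg (g : X) : Continuous (Fg fhat g) := hfc.comp (continuous_ext g)

lemma Pfun_eq (a : ℝ) (g : X) (y : ℝ) :
    Pfun s2 fhat a g y = a * y + s2 * ∫ t in (0:ℝ)..y, (y - t) * Fg fhat g t := by
  have hF := continuous_Fg fhat hfc g
  have h1 : ∀ t : ℝ, (y - t) * Fg fhat g t = y * Fg fhat g t - t * Fg fhat g t := by
    intro t; ring
  simp only [h1]
  have hA : Continuous fun t : ℝ => y * Fg fhat g t := continuous_const.mul hF
  have hB : Continuous fun t : ℝ => t * Fg fhat g t := continuous_id.mul hF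
  rw [intervalIntegral.integral_sub (hA.intervalIntegrable _ _) (hB.intervalIntegrable _ _),
    intervalIntegral.integral_const_mul]
  rfl

lemma hasDerivAt_Pfun (a : ℝ) (g : X) (y : ℝ) :
    HasDerivAt (Pfun s2 fhat a g) (a + s2 * ∫ t in (0:ℝ)..y, Fg fhat g t) y := by
  have hF := continuous_Fg fhat hfc g
  have h1 : HasDerivAt (fun u => ∫ t in (0:ℝ)..u, Fg fhat g t) (Fg fhat g y) y :=
    (hF.integral_hasStrictDerivAt 0 y).hasDerivAt
  have h2 : HasDerivAt (fun u => ∫ t in (0:ℝ)..u, t * Fg fhat g t) (y * Fg fhat g y) y :=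
    (((continuous_id.mul hF)).integral_hasStrictDerivAt 0 y).hasDerivAt
  have h3 : HasDerivAt (fun u : ℝ => u) 1 y := hasDerivAt_id y
  have := ((h3.const_mul a).add ((((h3.mul h1)).sub h2).const_mul s2))
  refine this.congr_deriv ?_
  ring

lemma continuous_Pfun (a : ℝ) (g : X) : Continuous (Pfun s2 fhat a g) :=
  continuous_iff_continuousAt.2 fun y => (hasDerivAt_Pfun s2 fhat hfc a g y).continuousAt

def T (a : ℝ) (g : X) : X :=
  ⟨fun y => Pfun s2 fhat a g (y : ℝ), (continuous_Pfun s2 fhat hfc a g).comp continuous_subtype_val⟩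

lemma T_apply (a : ℝ) (g : X) (y : Set.Icc (0:ℝ) 1) :
    T s2 fhat hfc a g y = Pfun s2 fhat a g (y : ℝ) := rfl


lemma iter_est (K : ℝ) (hK : 0 ≤ K) (hs2 : 0 ≤ s2)
    (hlip : ∀ t t' : ℝ, |fhat t - fhat t'| ≤ K * |t - t'|)
    (n : ℕ) (a b : ℝ) (g h : X) (y : Set.Icc (0:ℝ) 1) :
    |((T s2 fhat hfc a)^[n] g) y - ((T s2 fhat hfc b)^[n] h) y|
      ≤ (∑ i ∈ Finset.range n, (s2*K)^i) * |a - b|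
        + (s2*K)^n * (y:ℝ)^n / n.factorial * dist g h := by
  induction n generalizing y with
  | zero =>
      simpa [Real.dist_eq] using ContinuousMap.dist_apply_le_dist (f := g) (g := h) y
  | succ n ih =>
      have hq0 : 0 ≤ s2 * K := mul_nonneg hs2 hK
      set q := s2 * K with hqdef
      set S := ∑ i ∈ Finset.range n, q^i with hSdef
      set D := dist g h with hDdef
      have hD0 : 0 ≤ D := dist_nonneg
      have hS0 : 0 ≤ S := Finset.sum_nonneg fun i _ => pow_nonneg hq0 i
      set u := (T s2 fhat hfc a)^[n] g with hu
      set v := (T s2 fhat hfc b)^[n] h with hv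
      have hy0 : (0:ℝ) ≤ y := y.2.1
      have hy1 : (y:ℝ) ≤ 1 := y.2.2
      have hFu := continuous_Fg fhat hfc u
      have hFv := continuous_Fg fhat hfc v
      rw [Function.iterate_succ_apply', Function.iterate_succ_apply', T_apply, T_apply,
        Pfun_eq s2 fhat hfc, Pfun_eq s2 fhat hfc]
      set IU := ∫ t in (0:ℝ)..(y:ℝ), ((y:ℝ) - t) * Fg fhat u t with hIU
      set IV := ∫ t in (0:ℝ)..(y:ℝ), ((y:ℝ) - t) * Fg fhat v t with hIV
      set c1 := K * (S * |a - b|) with hc1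
      set c2 := K * (q^n / n.factorial * D) with hc2
      have hCu : Continuous fun t : ℝ => ((y:ℝ) - t) * Fg fhat u t :=
        (continuous_const.sub continuous_id).mul hFu
      have hCv : Continuous fun t : ℝ => ((y:ℝ) - t) * Fg fhat v t :=
        (continuous_const.sub continuous_id).mul hFv
      have hint : IU - IV
          = ∫ t in (0:ℝ)..(y:ℝ), (((y:ℝ) - t) * Fg fhat u t - ((y:ℝ) - t) * Fg fhat v t) :=
        (intervalIntegral.integral_sub (hCu.intervalIntegrable _ _)
          (hCv.intervalIntegrable _ _)).symm
      have hfac : (n.factorial : ℝ) ≠ 0 := by positivity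
      have key : |IU - IV|
          ≤ c1 * ((y:ℝ) - 0) + c2 * (((y:ℝ)^(n+1) - 0^(n+1)) / (n+1)) := by
        rw [hint, ← int_poly]
        refine abs_int_le hy0 (hCu.sub hCv) (by continuity) ?_
        intro t ht
        have ht1 : t ∈ Set.Icc (0:ℝ) 1 := ⟨ht.1, le_trans ht.2 hy1⟩
        have h2 : |Fg fhat u t - Fg fhat v t| ≤ K * (S * |a - b| + q^n * t^n / n.factorial * D) := by
          calc |Fg fhat u t - Fg fhat v t| ≤ K * |ext u t - ext v t| := by
                simpa [Fg] using hlip (ext u t) (ext v t)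
            _ ≤ K * (S * |a - b| + q^n * t^n / n.factorial * D) := by
                rw [ext_eq u ht1, ext_eq v ht1]
                exact mul_le_mul_of_nonneg_left (ih ⟨t, ht1⟩) hK
        have h3 : ((y:ℝ) - t) * Fg fhat u t - ((y:ℝ) - t) * Fg fhat v t
            = ((y:ℝ) - t) * (Fg fhat u t - Fg fhat v t) := by ring
        rw [h3, abs_mul]
        have h4 : |(y:ℝ) - t| ≤ 1 := by
          rw [abs_of_nonneg (by linarith [ht.2])]; linarith [ht.1]
        calc |(y:ℝ) - t| * |Fg fhat u t - Fg fhat v t|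
            ≤ 1 * (K * (S * |a - b| + q^n * t^n / n.factorial * D)) :=
              mul_le_mul h4 h2 (abs_nonneg _) one_pos.le
          _ = c1 + c2 * t^n := by rw [hc1, hc2]; ring
      have hstep : |(a * (y:ℝ) + s2 * IU) - (b * (y:ℝ) + s2 * IV)|
          ≤ |a - b| * (y:ℝ) + s2 * |IU - IV| := by
        have h5 : (a * (y:ℝ) + s2 * IU) - (b * (y:ℝ) + s2 * IV)
            = (a - b) * (y:ℝ) + s2 * (IU - IV) := by ring
        rw [h5]
        calc |(a - b) * (y:ℝ) + s2 * (IU - IV)| ≤ |(a - b) * (y:ℝ)| + |s2 * (IU - IV)| :=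
              abs_add_le _ _
          _ = |a - b| * (y:ℝ) + s2 * |IU - IV| := by
              rw [abs_mul, abs_mul, abs_of_nonneg hy0, abs_of_nonneg hs2]
      have hfac2 : ((n+1).factorial : ℝ) = ((n:ℝ)+1) * n.factorial := by
        rw [Nat.factorial_succ]; push_cast; ring
      have e1 : s2 * (c2 * (((y:ℝ)^(n+1) - 0^(n+1)) / (n+1)))
          = q^(n+1) * (y:ℝ)^(n+1) / (n+1).factorial * D := by
        rw [hfac2, hc2, hqdef]
        have hn1 : ((n:ℝ)+1) ≠ 0 := by positivity
        field_simp
        ring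
      have hsum : (∑ i ∈ Finset.range (n+1), q^i) = q * S + 1 := by
        rw [hSdef]; exact geom_sum_succ
      have haby : |a - b| * (y:ℝ) ≤ |a - b| :=
        mul_le_of_le_one_right (abs_nonneg _) hy1
      have hc1y : s2 * (c1 * ((y:ℝ) - 0)) ≤ q * S * |a - b| := by
        have h0 : s2 * (c1 * ((y:ℝ) - 0)) = (q * S * |a - b|) * (y:ℝ) := by
          rw [hc1, hqdef]; ring
        have hn : 0 ≤ q * S * |a - b| := mul_nonneg (mul_nonneg hq0 hS0) (abs_nonneg _)
        rw [h0]
        exact mul_le_of_le_one_right hn hy1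
      calc |(a * (y:ℝ) + s2 * IU) - (b * (y:ℝ) + s2 * IV)|
          ≤ |a - b| * (y:ℝ) + s2 * |IU - IV| := hstep
        _ ≤ |a - b| * (y:ℝ) + s2 * (c1 * ((y:ℝ) - 0) + c2 * (((y:ℝ)^(n+1) - 0^(n+1)) / (n+1))) := by
            exact add_le_add_right (mul_le_mul_of_nonneg_left key hs2) _
        _ ≤ (q * S + 1) * |a - b| + q^(n+1) * (y:ℝ)^(n+1) / (n+1).factorial * D := by
            have hsplit : s2 * (c1 * ((y:ℝ) - 0) + c2 * (((y:ℝ)^(n+1) - 0^(n+1)) / (n+1)))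
                = s2 * (c1 * ((y:ℝ) - 0)) + s2 * (c2 * (((y:ℝ)^(n+1) - 0^(n+1)) / (n+1))) := by
              ring
            linarith only [haby, hc1y, e1, hsplit.le, hsplit.ge]
        _ = (∑ i ∈ Finset.range (n+1), q^i) * |a - b|
            + q^(n+1) * (y:ℝ)^(n+1) / (n+1).factorial * D := by rw [hsum]
end
end Stmt4


open Set

set_option maxHeartbeats 1000000 in
/-- Existence of a `C²` solution to the two-point boundary value problem
`ρ'' = s² f̂(ρ)`, `ρ(0) = 0`, `ρ(1) = 𝔠`, with the `C²` bound
`‖ρ‖_{C²} ≤ (13 s²/8) sup|f̂| + 2𝔠` and Lipschitz continuity of `ρ''` with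
constant `s² Lip(f̂) ((13 s²/8) sup|f̂| + 2𝔠)`. -/
theorem stmt_4 (𝔠 s : ℝ) (h𝔠 : 0 < 𝔠) (hs : 0 < s)
    (fhat : ℝ → ℝ) (K M : ℝ) (hK : 0 ≤ K)
    (hlip : ∀ t t' : ℝ, |fhat t - fhat t'| ≤ K * |t - t'|)
    (hMbd : ∀ t : ℝ, |fhat t| ≤ M) :
    ∃ ρ ρ' ρ'' : ℝ → ℝ,
      (∀ y ∈ Set.Icc (0:ℝ) 1, HasDerivAt ρ (ρ' y) y)
      ∧ (∀ y ∈ Set.Icc (0:ℝ) 1, HasDerivAt ρ' (ρ'' y) y)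
      ∧ ContinuousOn ρ'' (Set.Icc 0 1)
      ∧ (∀ y ∈ Set.Icc (0:ℝ) 1, ρ'' y = s ^ 2 * fhat (ρ y))
      ∧ ρ 0 = 0 ∧ ρ 1 = 𝔠
      ∧ (∀ y ∈ Set.Icc (0:ℝ) 1,
          |ρ y| + |ρ' y| + |ρ'' y| ≤ 13 * s ^ 2 / 8 * M + 2 * 𝔠)
      ∧ (∀ y ∈ Set.Icc (0:ℝ) 1, ∀ y' ∈ Set.Icc (0:ℝ) 1,
          |ρ'' y - ρ'' y'| ≤ s ^ 2 * K * (13 * s ^ 2 / 8 * M + 2 * 𝔠) * |y - y'|) := by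
  classical
  have hM0 : 0 ≤ M := (abs_nonneg _).trans (hMbd 0)
  have hfc : Continuous fhat := by
    have h : LipschitzWith (Real.toNNReal K) fhat := by
      refine LipschitzWith.of_dist_le_mul fun t t' => ?_
      rw [Real.dist_eq, Real.dist_eq, Real.coe_toNNReal K hK]
      exact hlip t t'
    exact h.continuous
  set s2 := s ^ 2 with hs2def
  have hs2 : 0 ≤ s2 := sq_nonneg s
  set q := s2 * K with hqdef
  have hq0 : 0 ≤ q := mul_nonneg hs2 hK
  obtain ⟨n, hn⟩ : ∃ n : ℕ, q ^ n / n.factorial < 1 :=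
    ((FloorSemiring.tendsto_pow_div_factorial_atTop q).eventually_lt_const one_pos).exists
  set r := q ^ n / n.factorial with hrdef
  have hr0 : 0 ≤ r := by positivity
  set S := ∑ i ∈ Finset.range n, q ^ i with hSdef
  have hS0 : 0 ≤ S := Finset.sum_nonneg fun i _ => pow_nonneg hq0 i
  -- the distance estimate for iterates
  have keyd : ∀ (a b : ℝ) (g h : Stmt4.X),
      dist ((Stmt4.T s2 fhat hfc a)^[n] g) ((Stmt4.T s2 fhat hfc b)^[n] h)
        ≤ S * |a - b| + r * dist g h := by
    intro a b g h
    rw [ContinuousMap.dist_le (by positivity)]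
    intro y
    have h1 := Stmt4.iter_est s2 fhat hfc K hK hs2 hlip n a b g h y
    rw [Real.dist_eq]
    refine h1.trans ?_
    have hyn : (y:ℝ)^n ≤ 1 := pow_le_one₀ y.2.1 y.2.2
    have h2 : q^n * (y:ℝ)^n / n.factorial * dist g h ≤ r * dist g h := by
      rw [hrdef]
      have hnum : q^n * (y:ℝ)^n / n.factorial ≤ q^n / n.factorial := by
        gcongr
        exact mul_le_of_le_one_right (pow_nonneg hq0 n) hyn
      exact mul_le_mul_of_nonneg_right hnum dist_nonneg
    linarith
  -- existence of fixed points
  have hex : ∀ a : ℝ, ∃ g : Stmt4.X, Stmt4.T s2 fhat hfc a g = g := by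
    intro a
    have hlipT : LipschitzWith (Real.toNNReal r) ((Stmt4.T s2 fhat hfc a)^[n]) := by
      refine LipschitzWith.of_dist_le_mul fun g h => ?_
      have h1 := keyd a a g h
      simpa [Real.coe_toNNReal r hr0] using h1
    have hcontr : ContractingWith (Real.toNNReal r) ((Stmt4.T s2 fhat hfc a)^[n]) :=
      ⟨by exact_mod_cast Real.toNNReal_lt_one.2 hn, hlipT⟩
    set g0 := ContractingWith.fixedPoint _ hcontr with hg0
    have h1 : ((Stmt4.T s2 fhat hfc a)^[n]) g0 = g0 := hcontr.fixedPoint_isFixedPt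
    refine ⟨g0, ?_⟩
    have h2 : ((Stmt4.T s2 fhat hfc a)^[n]) (Stmt4.T s2 fhat hfc a g0)
        = Stmt4.T s2 fhat hfc a g0 := by
      rw [← Function.iterate_succ_apply, Function.iterate_succ_apply', h1]
    exact hcontr.fixedPoint_unique' h2 h1
  choose x hx using hex
  -- Lipschitz dependence of the fixed point on the parameter
  have hrlt : r < 1 := hn
  have h1r : (0:ℝ) < 1 - r := by linarith
  have hxd : ∀ a b : ℝ, dist (x a) (x b) ≤ S / (1 - r) * |a - b| := by
    intro a b
    have h1 : ((Stmt4.T s2 fhat hfc a)^[n]) (x a) = x a := Function.IsFixedPt.iterate (hx a) n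
    have h2 : ((Stmt4.T s2 fhat hfc b)^[n]) (x b) = x b := Function.IsFixedPt.iterate (hx b) n
    have h3 := keyd a b (x a) (x b)
    rw [h1, h2] at h3
    rw [div_mul_eq_mul_div, le_div_iff₀ h1r]
    nlinarith [h3]
  set one1 : Set.Icc (0:ℝ) 1 := ⟨1, ⟨zero_le_one, le_rfl⟩⟩ with hone1
  set φ : ℝ → ℝ := fun a => (x a) one1 with hφdef
  have hφc : Continuous φ := by
    have hL0 : 0 ≤ S / (1 - r) := div_nonneg hS0 h1r.le
    have h : LipschitzWith (Real.toNNReal (S / (1 - r))) φ := by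
      refine LipschitzWith.of_dist_le_mul fun a b => ?_
      rw [Real.coe_toNNReal _ hL0]
      exact le_trans (ContinuousMap.dist_apply_le_dist one1) (hxd a b)
    exact h.continuous
  -- value of the fixed point
  have hval : ∀ (a : ℝ) (y : Set.Icc (0:ℝ) 1),
      x a y = Stmt4.Pfun s2 fhat a (x a) (y : ℝ) := by
    intro a y
    conv_lhs => rw [← hx a]
    rfl
  have hφval : ∀ a : ℝ,
      φ a = a + s2 * ∫ t in (0:ℝ)..1, (1 - t) * Stmt4.Fg fhat (x a) t := by
    intro a
    rw [hφdef]
    simp only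
    rw [hval a one1, hone1]
    rw [show ((⟨1, ⟨zero_le_one, le_rfl⟩⟩ : Set.Icc (0:ℝ) 1) : ℝ) = 1 from rfl]
    rw [Stmt4.Pfun_eq s2 fhat hfc]
    ring
  -- bound |φ a - a| ≤ s2 * (M/2)
  have hφbd : ∀ a : ℝ, |φ a - a| ≤ s2 * (M / 2) := by
    intro a
    rw [hφval a]
    have h0 : a + (s2 * ∫ t in (0:ℝ)..1, (1 - t) * Stmt4.Fg fhat (x a) t) - a
        = s2 * ∫ t in (0:ℝ)..1, (1 - t) * Stmt4.Fg fhat (x a) t := by ring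
    rw [h0, abs_mul, abs_of_nonneg hs2]
    have hFc := Stmt4.continuous_Fg fhat hfc (x a)
    have hI : |∫ t in (0:ℝ)..1, (1 - t) * Stmt4.Fg fhat (x a) t| ≤ M / 2 := by
      have h1 : |∫ t in (0:ℝ)..1, (1 - t) * Stmt4.Fg fhat (x a) t|
          ≤ ∫ t in (0:ℝ)..1, (M + (-M) * t ^ 1) := by
        refine Stmt4.abs_int_le zero_le_one ((continuous_const.sub continuous_id).mul hFc)
          (continuous_const.add (continuous_const.mul (continuous_pow 1))) ?_
        intro t ht
        rw [abs_mul, abs_of_nonneg (by linarith [ht.2] : (0:ℝ) ≤ 1 - t), pow_one]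
        have hFbd : |Stmt4.Fg fhat (x a) t| ≤ M := hMbd _
        have h1t : (0:ℝ) ≤ 1 - t := by linarith [ht.2]
        have h2 := mul_le_mul_of_nonneg_left hFbd h1t
        nlinarith
      rw [Stmt4.int_poly] at h1
      norm_num at h1
      linarith
    exact mul_le_mul_of_nonneg_left hI hs2
  -- intermediate value theorem
  have hlo : φ (𝔠 - s2 * (M / 2)) ≤ 𝔠 := by
    have := abs_le.1 (hφbd (𝔠 - s2 * (M / 2))); linarith [this.2]
  have hhi : 𝔠 ≤ φ (𝔠 + s2 * (M / 2)) := by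
    have := abs_le.1 (hφbd (𝔠 + s2 * (M / 2))); linarith [this.1]
  have hlohi : 𝔠 - s2 * (M / 2) ≤ 𝔠 + s2 * (M / 2) := by nlinarith
  obtain ⟨a, _, hφa⟩ := intermediate_value_Icc hlohi hφc.continuousOn ⟨hlo, hhi⟩
  -- the solution
  set g : Stmt4.X := x a with hgdef
  set F : ℝ → ℝ := Stmt4.Fg fhat g with hFdef
  have hFc : Continuous F := Stmt4.continuous_Fg fhat hfc g
  have hFbd : ∀ t : ℝ, |F t| ≤ M := fun t => hMbd _
  have hC1 : Continuous fun t : ℝ => (1 - t) * F t := (continuous_const.sub continuous_id).mul hFc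
  have hC2 : Continuous fun t : ℝ => t * F t := continuous_id.mul hFc
  set ρ : ℝ → ℝ := Stmt4.Pfun s2 fhat a g with hρdef
  set ρ' : ℝ → ℝ := fun y => a + s2 * ∫ t in (0:ℝ)..y, F t with hρ'def
  set ρ'' : ℝ → ℝ := fun y => s2 * F y with hρ''def
  have hd1 : ∀ y : ℝ, HasDerivAt ρ (ρ' y) y := fun y => Stmt4.hasDerivAt_Pfun s2 fhat hfc a g y
  have hd2 : ∀ y : ℝ, HasDerivAt ρ' (ρ'' y) y := fun y =>
    ((hFc.integral_hasStrictDerivAt 0 y).hasDerivAt.const_mul s2).const_add a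
  have hρg : ∀ (y : ℝ) (hy : y ∈ Set.Icc (0:ℝ) 1), ρ y = g ⟨y, hy⟩ := fun y hy =>
    (hval a ⟨y, hy⟩).symm
  have hFρ : ∀ y : ℝ, y ∈ Set.Icc (0:ℝ) 1 → F y = fhat (ρ y) := by
    intro y hy
    show fhat (Stmt4.ext g y) = fhat (ρ y)
    rw [Stmt4.ext_eq g hy, hρg y hy]
  have hρ0 : ρ 0 = 0 := by
    rw [hρdef]
    simp [Stmt4.Pfun, intervalIntegral.integral_same]
  have hρ1 : ρ 1 = 𝔠 := by
    rw [← hφa]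
    show ρ 1 = (x a) one1
    exact hρg 1 ⟨zero_le_one, le_rfl⟩
  set U : ℝ → ℝ := fun y => ∫ t in (0:ℝ)..y, (1 - t) * F t with hUdef
  set V : ℝ → ℝ := fun y => ∫ t in (0:ℝ)..y, t * F t with hVdef
  set W : ℝ → ℝ := fun y => ∫ t in y..(1:ℝ), (1 - t) * F t with hWdef
  have hc_eq : 𝔠 = a + s2 * U 1 := by rw [← hφa, hφval a]
  have hadj : ∀ y : ℝ, U y + W y = U 1 := fun y =>
    intervalIntegral.integral_add_adjacent_intervals (hC1.intervalIntegrable _ _)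
      (hC1.intervalIntegrable _ _)
  have hsplitF : ∀ y : ℝ, ∫ t in (0:ℝ)..y, F t = U y + V y := by
    intro y
    rw [hUdef, hVdef]
    simp only
    rw [← intervalIntegral.integral_add (hC1.intervalIntegrable _ _) (hC2.intervalIntegrable _ _)]
    exact intervalIntegral.integral_congr fun t _ => by ring
  -- bounds on the pieces
  have hVbd : ∀ y : ℝ, y ∈ Set.Icc (0:ℝ) 1 → |V y| ≤ M * y ^ 2 / 2 := by
    intro y hy
    have h2 : |V y| ≤ ∫ t in (0:ℝ)..y, (0 + M * t ^ 1) := by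
      refine Stmt4.abs_int_le hy.1 hC2
        (continuous_const.add (continuous_const.mul (continuous_pow 1))) ?_
      intro t ht
      rw [abs_mul, pow_one, abs_of_nonneg ht.1]
      have h3 := mul_le_mul_of_nonneg_left (hFbd t) ht.1
      linarith
    rw [Stmt4.int_poly] at h2
    norm_num at h2
    linarith
  have hWbd : ∀ y : ℝ, y ∈ Set.Icc (0:ℝ) 1 → |W y| ≤ M * (1 - y) ^ 2 / 2 := by
    intro y hy
    have h2 : |W y| ≤ ∫ t in y..(1:ℝ), (M + (-M) * t ^ 1) := by
      refine Stmt4.abs_int_le hy.2 hC1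
        (continuous_const.add (continuous_const.mul (continuous_pow 1))) ?_
      intro t ht
      have h1t : (0:ℝ) ≤ 1 - t := by linarith [ht.2]
      rw [abs_mul, pow_one, abs_of_nonneg h1t]
      have h3 := mul_le_mul_of_nonneg_left (hFbd t) h1t
      linarith
    rw [Stmt4.int_poly] at h2
    norm_num at h2
    nlinarith [h2]
  -- first derivative representation and bound
  have hρ'eq : ∀ y : ℝ, ρ' y = 𝔠 + s2 * (V y - W y) := by
    intro y
    show a + s2 * ∫ t in (0:ℝ)..y, F t = 𝔠 + s2 * (V y - W y)
    rw [hsplitF y]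
    linear_combination -hc_eq + s2 * hadj y
  have hB1 : ∀ y : ℝ, y ∈ Set.Icc (0:ℝ) 1 → |ρ' y| ≤ 𝔠 + s2 * (M / 2) := by
    intro y hy
    rw [hρ'eq y]
    have h5 : |V y - W y| ≤ |V y| + |W y| := abs_sub _ _
    have h6 : |𝔠 + s2 * (V y - W y)| ≤ 𝔠 + s2 * (|V y| + |W y|) := by
      calc |𝔠 + s2 * (V y - W y)| ≤ |𝔠| + |s2 * (V y - W y)| := abs_add_le _ _
        _ = 𝔠 + s2 * |V y - W y| := by rw [abs_of_pos h𝔠, abs_mul, abs_of_nonneg hs2]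
        _ ≤ 𝔠 + s2 * (|V y| + |W y|) := by
            have := mul_le_mul_of_nonneg_left h5 hs2; linarith
    have h7 : M * y ^ 2 / 2 + M * (1 - y) ^ 2 / 2 ≤ M / 2 := by
      nlinarith [mul_nonneg (mul_nonneg hM0 hy.1) (by linarith [hy.2] : (0:ℝ) ≤ 1 - y)]
    have h8 := mul_le_mul_of_nonneg_left
      (add_le_add (hVbd y hy) (hWbd y hy)) hs2
    have h9 := mul_le_mul_of_nonneg_left h7 hs2
    linarith
  -- zeroth order representation and bound
  have hρeq : ∀ y : ℝ, ρ y = 𝔠 * y + s2 * ((∫ t in (0:ℝ)..y, (t * (y - 1)) * F t) - y * W y) := by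
    intro y
    have hPe : ρ y = a * y + s2 * ∫ t in (0:ℝ)..y, (y - t) * F t :=
      Stmt4.Pfun_eq s2 fhat hfc a g y
    have hC3 : Continuous fun t : ℝ => y * ((1 - t) * F t) := continuous_const.mul hC1
    have hC4 : Continuous fun t : ℝ => (y - t) * F t := (continuous_const.sub continuous_id).mul hFc
    have h2 : (∫ t in (0:ℝ)..y, (t * (y - 1)) * F t)
        = (∫ t in (0:ℝ)..y, (y - t) * F t) - y * U y := by
      calc (∫ t in (0:ℝ)..y, (t * (y - 1)) * F t)
          = ∫ t in (0:ℝ)..y, ((y - t) * F t - y * ((1 - t) * F t)) :=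
            intervalIntegral.integral_congr fun t _ => by ring
        _ = (∫ t in (0:ℝ)..y, (y - t) * F t) - ∫ t in (0:ℝ)..y, y * ((1 - t) * F t) :=
            intervalIntegral.integral_sub (hC4.intervalIntegrable _ _) (hC3.intervalIntegrable _ _)
        _ = (∫ t in (0:ℝ)..y, (y - t) * F t) - y * U y := by
            rw [intervalIntegral.integral_const_mul]
    rw [hPe, h2]
    linear_combination (-y) * hc_eq + (s2 * y) * hadj y
  have hB0 : ∀ y : ℝ, y ∈ Set.Icc (0:ℝ) 1 → |ρ y| ≤ 𝔠 * y + s2 * (M / 8) := by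
    intro y hy
    rw [hρeq y]
    have h1y : (0:ℝ) ≤ 1 - y := by linarith [hy.2]
    have hV2 : |∫ t in (0:ℝ)..y, (t * (y - 1)) * F t| ≤ (1 - y) * M * (y ^ 2 / 2) := by
      have h2 : |∫ t in (0:ℝ)..y, (t * (y - 1)) * F t|
          ≤ ∫ t in (0:ℝ)..y, (0 + ((1 - y) * M) * t ^ 1) := by
        refine Stmt4.abs_int_le hy.1 (((continuous_id.mul continuous_const)).mul hFc)
          (continuous_const.add (continuous_const.mul (continuous_pow 1))) ?_
        intro t ht
        rw [abs_mul, abs_mul, pow_one, abs_of_nonneg ht.1, abs_of_nonpos (by linarith [hy.2] : y - 1 ≤ 0)]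
        have h3 := mul_le_mul_of_nonneg_left (hFbd t) (mul_nonneg ht.1 h1y)
        nlinarith [abs_nonneg (F t)]
      rw [Stmt4.int_poly] at h2
      norm_num at h2
      nlinarith [h2]
    have habs : |𝔠 * y + s2 * ((∫ t in (0:ℝ)..y, (t * (y - 1)) * F t) - y * W y)|
        ≤ 𝔠 * y + s2 * (|∫ t in (0:ℝ)..y, (t * (y - 1)) * F t| + y * |W y|) := by
      have h5 : |(∫ t in (0:ℝ)..y, (t * (y - 1)) * F t) - y * W y|
          ≤ |∫ t in (0:ℝ)..y, (t * (y - 1)) * F t| + y * |W y| := by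
        have := abs_sub (∫ t in (0:ℝ)..y, (t * (y - 1)) * F t) (y * W y)
        rw [abs_mul, abs_of_nonneg hy.1] at this
        exact this
      calc |𝔠 * y + s2 * ((∫ t in (0:ℝ)..y, (t * (y - 1)) * F t) - y * W y)|
          ≤ |𝔠 * y| + |s2 * ((∫ t in (0:ℝ)..y, (t * (y - 1)) * F t) - y * W y)| := abs_add_le _ _
        _ = 𝔠 * y + s2 * |(∫ t in (0:ℝ)..y, (t * (y - 1)) * F t) - y * W y| := by
            rw [abs_mul, abs_of_pos h𝔠, abs_of_nonneg hy.1, abs_mul, abs_of_nonneg hs2]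
        _ ≤ _ := by
            have := mul_le_mul_of_nonneg_left h5 hs2; linarith
    have h7 : (1 - y) * M * (y ^ 2 / 2) + y * (M * (1 - y) ^ 2 / 2) ≤ M / 8 := by
      nlinarith [sq_nonneg (2 * y - 1), hM0, hy.1, h1y,
        mul_nonneg (mul_nonneg hM0 hy.1) h1y, sq_nonneg y, sq_nonneg (1 - y),
        mul_nonneg hM0 (sq_nonneg (2 * y - 1))]
    have h8 := mul_le_mul_of_nonneg_left
      (add_le_add hV2 (mul_le_mul_of_nonneg_left (hWbd y hy) hy.1)) hs2
    have h9 := mul_le_mul_of_nonneg_left h7 hs2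
    linarith
  have hB2 : ∀ y : ℝ, |ρ'' y| ≤ s2 * M := by
    intro y
    show |s2 * F y| ≤ s2 * M
    rw [abs_mul, abs_of_nonneg hs2]
    exact mul_le_mul_of_nonneg_left (hFbd y) hs2
  refine ⟨ρ, ρ', ρ'', fun y _ => hd1 y, fun y _ => hd2 y,
    (continuous_const.mul hFc).continuousOn, ?_, hρ0, hρ1, ?_, ?_⟩
  · intro y hy
    show s2 * F y = s2 * fhat (ρ y)
    rw [hFρ y hy]
  · intro y hy
    have h1 := hB0 y hy
    have h2 := hB1 y hy
    have h3 := hB2 y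
    have h4 : 𝔠 * y ≤ 𝔠 := by nlinarith [hy.2, h𝔠.le, hy.1]
    linarith
  · intro y hy y' hy'
    have hder : ∀ z ∈ Set.Icc (0:ℝ) 1, HasDerivWithinAt ρ (ρ' z) (Set.Icc 0 1) z :=
      fun z _ => (hd1 z).hasDerivWithinAt
    have hbd : ∀ z ∈ Set.Icc (0:ℝ) 1, ‖ρ' z‖ ≤ 𝔠 + s2 * (M / 2) := fun z hz => by
      rw [Real.norm_eq_abs]; exact hB1 z hz
    have h1 := (convex_Icc (0:ℝ) 1).norm_image_sub_le_of_norm_hasDerivWithin_le hder hbd hy' hy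
    rw [Real.norm_eq_abs, Real.norm_eq_abs] at h1
    have h2 : |ρ'' y - ρ'' y'| = s2 * |F y - F y'| := by
      show |s2 * F y - s2 * F y'| = s2 * |F y - F y'|
      rw [show s2 * F y - s2 * F y' = s2 * (F y - F y') from by ring, abs_mul,
        abs_of_nonneg hs2]
    have h3 : |F y - F y'| ≤ K * |ρ y - ρ y'| := by
      rw [hFρ y hy, hFρ y' hy']; exact hlip _ _
    have h4 : |F y - F y'| ≤ K * ((𝔠 + s2 * (M / 2)) * |y - y'|) :=
      h3.trans (mul_le_mul_of_nonneg_left h1 hK)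
    rw [h2]
    have h5 := mul_le_mul_of_nonneg_left h4 hs2
    have h7 : 0 ≤ (13 * s2 / 8 * M + 2 * 𝔠) - (𝔠 + s2 * (M / 2)) := by
      nlinarith [mul_nonneg hs2 hM0]
    have h8 : 0 ≤ ((s2 * K) * |y - y'|) * ((13 * s2 / 8 * M + 2 * 𝔠) - (𝔠 + s2 * (M / 2))) :=
      mul_nonneg (mul_nonneg (mul_nonneg hs2 hK) (abs_nonneg _)) h7
    rw [hqdef] at *
    linarith [h5, h8]
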